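/- There exists a truth assignment u ∈ {0,1}^m such that every clause C_1,…,C_n has at least one literal made true by u and at least one literal made false by u, if and only if the maximum of ⟨y,x⟩ over x ∈ SATP_LP(m,n) equals 3n and the maximum of ⟨y,z⟩ over the integral points z of SATP_LP(m,n) equals 3n. -/

import Mathlib

open Finset

/-- A point of ℝ^{6mn}: coordinates x^{k,l}_{i,j} with `i : Fin m`, `j : Fin n`,
`k : Fin 3` (the paper's k-1, since the paper indexes k ∈ {1,2,3}) and
`l : Fin 2` (the paper's l-1). -/
abbrev Pt (m n : ℕ) := Fin m → Fin n → Fin 3 → Fin 2 → ℝ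

/-- The relaxation polytope SATP_LP(m,n), given by the constraints (i)-(iv). -/
def SATPLP (m n : ℕ) : Set (Pt m n) :=
  {x | (∀ i j, ∑ k, ∑ l, x i j k l = 1) ∧
       (∀ i j t, ∑ k, x i j k 0 = ∑ k, x i t k 0) ∧
       (∀ k j i s, x i j k 0 + x i j k 1 = x s j k 0 + x s j k 1) ∧
       (∀ i j k l, 0 ≤ x i j k l)}

/-- The integral points of SATP_LP(m,n): the points all of whose coordinates are 0 or 1. -/
def IntPts (m n : ℕ) : Set (Pt m n) :=
  {x | x ∈ SATPLP m n ∧ ∀ i j k l, x i j k l = 0 ∨ x i j k l = 1}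

/-- SATP(m,n): the convex hull of the integral points of SATP_LP(m,n). -/
def SATP (m n : ℕ) : Set (Pt m n) := convexHull ℝ (IntPts m n)

/-- Standard inner product on ℝ^{6mn}. -/
def dotp {m n : ℕ} (v x : Pt m n) : ℝ :=
  ∑ i, ∑ j, ∑ k, ∑ l, v i j k l * x i j k l

/-- A 3-clause over m Boolean variables: the literal at each of the three places.
A literal is a pair (variable, sign) where sign `0` is positive (the paper's s = 1)
and sign `1` is negated (the paper's s = 2). -/
abbrev Clause (m : ℕ) := Fin 3 → Fin m × Fin 2

/-- Truth assignment u makes the literal (i,s) true iff s is positive and u i = 1,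
or s is negated and u i = 0. -/
def LitTrue {m : ℕ} (u : Fin m → Fin 2) (lit : Fin m × Fin 2) : Prop :=
  (lit.2 = 0 ∧ u lit.1 = 1) ∨ (lit.2 = 1 ∧ u lit.1 = 0)

/-- Sign flip, the paper's s ↦ 3 - s (also serving as u_i = 1 - r_i). -/
def flipSign (s : Fin 2) : Fin 2 := if s = 0 then 1 else 0

/-- The NAE-3SAT objective vector y: if clause C_j has literal (i,s) at place k then
y^{k,s}_{i,j} = 1, y^{k+1,3-s}_{i,j} = 1 and y^{k+2,1}_{i,j} = y^{k+2,2}_{i,j} = 1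
(places cyclically mod 3); all other coordinates are 0. Equivalently, position q gets a 1
at (i,s) from its own literal, at (i, flip s) from the literal at place q-1, and at
(i, both signs) from the literal at place q+1. -/
def yVec {m n : ℕ} (C : Fin n → Clause m) : Pt m n :=
  fun i j q s =>
    if C j q = (i, s) ∨ C j (q - 1) = (i, flipSign s) ∨ (C j (q + 1)).1 = i then 1 else 0


section Helpers

variable {m n : ℕ}

lemma fin3_sub_one_ne : ∀ q : Fin 3, q - 1 ≠ q := by decide

lemma fin3_add_one_ne : ∀ q : Fin 3, q + 1 ≠ q := by decide

lemma fin3_add_ne_sub : ∀ q : Fin 3, q + 1 ≠ q - 1 := by decide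

lemma fin3_cases : ∀ p q : Fin 3, p = q ∨ p = q - 1 ∨ p = q + 1 := by decide

lemma flipSign_flip_flip : ∀ s : Fin 2, flipSign (flipSign s) = s := by decide

lemma flip_ne : ∀ s : Fin 2, flipSign s ≠ s := by decide

lemma fin2_eq_flip_of_ne : ∀ {a b : Fin 2}, a ≠ b → a = flipSign b := by decide

lemma litTrue_iff (u : Fin m → Fin 2) (lit : Fin m × Fin 2) :
    LitTrue u lit ↔ u lit.1 = flipSign lit.2 := by
  have h : ∀ a b : Fin 2, ((b = 0 ∧ a = 1) ∨ (b = 1 ∧ a = 0)) ↔ a = flipSign b := by decide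
  exact h (u lit.1) lit.2

lemma cyclic (P : Fin 3 → Prop) (h1 : ∃ q, P q) (h2 : ∃ q, ¬ P q) :
    ∃ q, P q ∧ ¬ P (q - 1) := by
  have e0 : (0 : Fin 3) - 1 = 2 := by decide
  have e1 : (1 : Fin 3) - 1 = 0 := by decide
  have e2 : (2 : Fin 3) - 1 = 1 := by decide
  by_cases p0 : P 0 <;> by_cases p1 : P 1 <;> by_cases p2 : P 2
  · obtain ⟨q, hq⟩ := h2; fin_cases q <;> contradiction
  · exact ⟨0, p0, e0 ▸ p2⟩
  · exact ⟨2, p2, e2 ▸ p1⟩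
  · exact ⟨0, p0, e0 ▸ p2⟩
  · exact ⟨1, p1, e1 ▸ p0⟩
  · exact ⟨1, p1, e1 ▸ p0⟩
  · exact ⟨2, p2, e2 ▸ p1⟩
  · obtain ⟨q, hq⟩ := h1; fin_cases q <;> contradiction

lemma myUniqueOne {α : Type*} (s : Finset α) (f : α → ℝ)
    (h01 : ∀ a ∈ s, f a = 0 ∨ f a = 1) (hsum : ∑ a ∈ s, f a = 1) :
    ∃ a ∈ s, f a = 1 ∧ ∀ b ∈ s, b ≠ a → f b = 0 := by
  classical
  have hex : ∃ a ∈ s, f a = 1 := by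
    by_contra h
    push_neg at h
    have : ∑ a ∈ s, f a = 0 :=
      Finset.sum_eq_zero fun a ha => (h01 a ha).resolve_right (h a ha)
    linarith
  obtain ⟨a, ha, hfa⟩ := hex
  refine ⟨a, ha, hfa, fun b hb hba => ?_⟩
  have hsplit : f a + ∑ x ∈ s.erase a, f x = ∑ x ∈ s, f x := Finset.add_sum_erase s f ha
  have hnn : ∀ x ∈ s.erase a, 0 ≤ f x := fun x hx => by
    rcases h01 x (Finset.mem_erase.1 hx).2 with h | h <;> simp [h]
  have h0 : ∑ x ∈ s.erase a, f x = 0 := by linarith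
  exact (Finset.sum_eq_zero_iff_of_nonneg hnn).1 h0 b (Finset.mem_erase.2 ⟨hba, hb⟩)

lemma myAllEq {α : Type*} (s : Finset α) (f : α → ℝ) (c : ℝ)
    (hle : ∀ a ∈ s, f a ≤ c) (hsum : ∑ a ∈ s, f a = s.card * c) :
    ∀ a ∈ s, f a = c := by
  have h0 : ∑ a ∈ s, (c - f a) = 0 := by
    rw [Finset.sum_sub_distrib, Finset.sum_const, nsmul_eq_mul]; linarith
  intro a ha
  have := (Finset.sum_eq_zero_iff_of_nonneg fun x hx => sub_nonneg.2 (hle x hx)).1 h0 a ha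
  linarith

end Helpers


section Construction

variable {m n : ℕ}

/-- The integral point determined by a place choice per clause and a sign choice
per variable. -/
def zpt (κ : Fin n → Fin 3) (r : Fin m → Fin 2) : Pt m n :=
  fun i j k l => (if k = κ j then (1:ℝ) else 0) * (if l = r i then (1:ℝ) else 0)

lemma zpt_sum_pick (v : Fin 3 → Fin 2 → ℝ) (a : Fin 3) (b : Fin 2) :
    ∑ k, ∑ l, v k l * ((if k = a then (1:ℝ) else 0) * (if l = b then (1:ℝ) else 0))
      = v a b := by
  simp [mul_ite, ite_mul, Finset.sum_ite_eq']

lemma zpt_mem (κ : Fin n → Fin 3) (r : Fin m → Fin 2) : zpt κ r ∈ IntPts m n := by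
  refine ⟨⟨?_, ?_, ?_, ?_⟩, ?_⟩
  · intro i j
    simp [zpt, ite_mul, Finset.sum_ite_eq']
  · intro i j t
    simp [zpt, ite_mul, Finset.sum_ite_eq']
  · intro k j i s
    have hf2 : ∀ b : Fin 2, b = 0 ∨ b = 1 := by decide
    have key : ∀ t : Fin m, zpt κ r t j k 0 + zpt κ r t j k 1
        = if k = κ j then (1:ℝ) else 0 := by
      intro t
      rcases hf2 (r t) with h | h <;> simp [zpt, h]
    rw [key, key]
  · intro i j k l
    unfold zpt
    positivity
  · intro i j k l
    unfold zpt
    by_cases h1 : k = κ j <;> by_cases h2 : l = r i <;> simp [h1, h2]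

end Construction


section YLemmas

variable {m n : ℕ} (C : Fin n → Clause m)

lemma yVec_01 (i : Fin m) (j : Fin n) (k : Fin 3) (l : Fin 2) :
    yVec C i j k l = 0 ∨ yVec C i j k l = 1 := by
  unfold yVec; split <;> simp

lemma yVec_nonneg (i : Fin m) (j : Fin n) (k : Fin 3) (l : Fin 2) :
    0 ≤ yVec C i j k l := by
  rcases yVec_01 C i j k l with h | h <;> simp [h]

lemma yVec_le_one (i : Fin m) (j : Fin n) (k : Fin 3) (l : Fin 2) :
    yVec C i j k l ≤ 1 := by
  rcases yVec_01 C i j k l with h | h <;> simp [h]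

lemma yVec_eq_zero {i : Fin m} {j : Fin n} (h : ∀ p : Fin 3, (C j p).1 ≠ i)
    (k : Fin 3) (l : Fin 2) : yVec C i j k l = 0 := by
  unfold yVec
  rw [if_neg]
  rintro (h1 | h2 | h3)
  · exact h k (by rw [h1])
  · exact h (k - 1) (by rw [h2])
  · exact h (k + 1) h3

/-- the set of variables of clause j -/
def cvars (j : Fin n) : Finset (Fin m) := Finset.univ.image fun p => (C j p).1

lemma cvars_card (hdist : ∀ j, Function.Injective fun k => (C j k).1) (j : Fin n) :
    (cvars C j).card = 3 := by
  rw [cvars, Finset.card_image_of_injective _ (hdist j), Finset.card_univ,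
    Fintype.card_fin]

lemma inner_le_one {x : Pt m n} (hx : x ∈ SATPLP m n) (i : Fin m) (j : Fin n) :
    ∑ k, ∑ l, yVec C i j k l * x i j k l ≤ 1 := by
  calc ∑ k, ∑ l, yVec C i j k l * x i j k l
      ≤ ∑ k, ∑ l, x i j k l := by
        refine Finset.sum_le_sum fun k _ => Finset.sum_le_sum fun l _ => ?_
        calc yVec C i j k l * x i j k l ≤ 1 * x i j k l :=
              mul_le_mul_of_nonneg_right (yVec_le_one C i j k l) (hx.2.2.2 i j k l)
          _ = x i j k l := one_mul _
    _ = 1 := hx.1 i j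

lemma dotp_le (hdist : ∀ j, Function.Injective fun k => (C j k).1)
    {x : Pt m n} (hx : x ∈ SATPLP m n) : dotp (yVec C) x ≤ 3 * (n : ℝ) := by
  rw [dotp, Finset.sum_comm]
  calc ∑ j, ∑ i, ∑ k, ∑ l, yVec C i j k l * x i j k l
      ≤ ∑ j : Fin n, (3 : ℝ) := by
        refine Finset.sum_le_sum fun j _ => ?_
        calc ∑ i, ∑ k, ∑ l, yVec C i j k l * x i j k l
            ≤ ∑ i, (if i ∈ cvars C j then (1:ℝ) else 0) := by
              refine Finset.sum_le_sum fun i _ => ?_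
              by_cases h : i ∈ cvars C j
              · rw [if_pos h]; exact inner_le_one C hx i j
              · rw [if_neg h]
                have hz : ∀ p : Fin 3, (C j p).1 ≠ i := by
                  intro p hp
                  exact h (Finset.mem_image.2 ⟨p, Finset.mem_univ p, hp⟩)
                refine le_of_eq (Finset.sum_eq_zero fun k _ =>
                  Finset.sum_eq_zero fun l _ => ?_)
                rw [yVec_eq_zero C hz, zero_mul]
          _ = ((cvars C j).card : ℝ) := by
              rw [Finset.sum_ite_mem, Finset.univ_inter, Finset.sum_const,
                nsmul_eq_mul, mul_one]
          _ = 3 := by rw [cvars_card C hdist]; norm_num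
    _ = 3 * (n : ℝ) := by
        rw [Finset.sum_const, Finset.card_univ, Fintype.card_fin, nsmul_eq_mul]; ring

lemma dotp_zpt (hdist : ∀ j, Function.Injective fun k => (C j k).1)
    (κ : Fin n → Fin 3) (r : Fin m → Fin 2) :
    dotp (yVec C) (zpt κ r)
      = ∑ j, ∑ p : Fin 3, yVec C (C j p).1 j (κ j) (r (C j p).1) := by
  rw [dotp, Finset.sum_comm]
  refine Finset.sum_congr rfl fun j _ => ?_
  have hpick : ∀ i, ∑ k, ∑ l, yVec C i j k l * zpt κ r i j k l
      = yVec C i j (κ j) (r i) := fun i => zpt_sum_pick _ _ _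
  calc ∑ i, ∑ k, ∑ l, yVec C i j k l * zpt κ r i j k l
      = ∑ i, yVec C i j (κ j) (r i) := Finset.sum_congr rfl fun i _ => hpick i
    _ = ∑ i ∈ cvars C j, yVec C i j (κ j) (r i) := by
        refine (Finset.sum_subset (Finset.subset_univ _) fun i _ hi => ?_).symm
        have hz : ∀ p : Fin 3, (C j p).1 ≠ i := fun p hp =>
          hi (Finset.mem_image.2 ⟨p, Finset.mem_univ p, hp⟩)
        exact yVec_eq_zero C hz _ _
    _ = ∑ p : Fin 3, yVec C (C j p).1 j (κ j) (r (C j p).1) :=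
        Finset.sum_image fun a _ b _ h => hdist j h

end YLemmas


section Structure

variable {m n : ℕ}

lemma cell_struct {z : Pt m n} (hz : z ∈ IntPts m n) (i : Fin m) (j : Fin n) :
    ∃ a : Fin 3, ∃ b : Fin 2, ∀ k l,
      z i j k l = if k = a ∧ l = b then (1:ℝ) else 0 := by
  classical
  have hsum : ∑ p : Fin 3 × Fin 2, z i j p.1 p.2 = 1 := by
    rw [Fintype.sum_prod_type]
    exact hz.1.1 i j
  obtain ⟨⟨a, b⟩, -, hone, hzero⟩ :=
    myUniqueOne Finset.univ (fun p : Fin 3 × Fin 2 => z i j p.1 p.2)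
      (fun p _ => hz.2 i j p.1 p.2) hsum
  refine ⟨a, b, fun k l => ?_⟩
  by_cases h : k = a ∧ l = b
  · rw [if_pos h, h.1, h.2]; exact hone
  · rw [if_neg h]
    refine hzero (k, l) (Finset.mem_univ _) fun heq => h ?_
    exact ⟨congrArg Prod.fst heq, congrArg Prod.snd heq⟩

lemma sum_ind_l (a : Fin 3) (b : Fin 2) :
    ∑ k : Fin 3, (if k = a ∧ (0:Fin 2) = b then (1:ℝ) else 0)
      = if b = 0 then (1:ℝ) else 0 := by
  by_cases hb : b = 0 <;> simp [hb, eq_comm]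

lemma sum_ind_k (a : Fin 3) (b : Fin 2) (k : Fin 3) :
    (if k = a ∧ (0:Fin 2) = b then (1:ℝ) else 0)
      + (if k = a ∧ (1:Fin 2) = b then (1:ℝ) else 0)
      = if k = a then (1:ℝ) else 0 := by
  have hf2 : ∀ c : Fin 2, c = 0 ∨ c = 1 := by decide
  rcases hf2 b with h | h <;> subst h <;> by_cases hk : k = a <;> simp [hk]

lemma int_struct {z : Pt m n} (hz : z ∈ IntPts m n) (i₀ : Fin m) (j₀ : Fin n) :
    ∃ κ : Fin n → Fin 3, ∃ r : Fin m → Fin 2, z = zpt κ r := by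
  classical
  choose A B hAB using fun i j => cell_struct hz i j
  have hB : ∀ i j, B i j = B i j₀ := by
    intro i j
    have h2 := hz.1.2.1 i j j₀
    rw [Finset.sum_congr rfl fun k _ => hAB i j k 0,
      Finset.sum_congr rfl fun k _ => hAB i j₀ k 0, sum_ind_l, sum_ind_l] at h2
    by_cases h1 : B i j = 0 <;> by_cases h3 : B i j₀ = 0
    · rw [h1, h3]
    · rw [if_pos h1, if_neg h3] at h2; norm_num at h2
    · rw [if_neg h1, if_pos h3] at h2; norm_num at h2
    · have hf2 : ∀ c : Fin 2, c ≠ 0 → c = 1 := by decide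
      rw [hf2 _ h1, hf2 _ h3]
  have hA : ∀ i j, A i j = A i₀ j := by
    intro i j
    have h2 := hz.1.2.2.1 (A i j) j i i₀
    rw [hAB i j _ 0, hAB i j _ 1, hAB i₀ j _ 0, hAB i₀ j _ 1,
      sum_ind_k, sum_ind_k, if_pos rfl] at h2
    by_cases h : A i j = A i₀ j
    · exact h
    · rw [if_neg h] at h2; norm_num at h2
  refine ⟨fun j => A i₀ j, fun i => B i j₀, ?_⟩
  funext i j k l
  rw [hAB i j k l, zpt]
  rw [← hA i j, ← hB i j]
  by_cases h1 : k = A i j <;> by_cases h2 : l = B i j <;> simp [h1, h2]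

end Structure


section CondLemmas

variable {m n : ℕ} (C : Fin n → Clause m)

lemma yVec_one_of {i : Fin m} {j : Fin n} {q : Fin 3} {t : Fin 2}
    (h : C j q = (i, t) ∨ C j (q - 1) = (i, flipSign t) ∨ (C j (q + 1)).1 = i) :
    yVec C i j q t = 1 := by
  unfold yVec; rw [if_pos h]

lemma yVec_cond_of_one {i : Fin m} {j : Fin n} {q : Fin 3} {t : Fin 2}
    (h : yVec C i j q t = 1) :
    C j q = (i, t) ∨ C j (q - 1) = (i, flipSign t) ∨ (C j (q + 1)).1 = i := by
  unfold yVec at h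
  split_ifs at h with hc
  · exact hc
  · norm_num at h

end CondLemmas

/-- there is a truth assignment making at least one literal true and at
least one literal false in every clause iff the maximum of ⟨y,x⟩ over SATP_LP(m,n)
equals 3n and the maximum of ⟨y,z⟩ over the integral points equals 3n. -/
theorem stmt7 (m n : ℕ) (C : Fin n → Clause m)
    (hdist : ∀ j, Function.Injective fun k => (C j k).1) :
    (∃ u : Fin m → Fin 2, ∀ j,
        (∃ k, LitTrue u (C j k)) ∧ (∃ k, ¬ LitTrue u (C j k))) ↔
      (IsGreatest (dotp (yVec C) '' SATPLP m n) (3 * (n : ℝ)) ∧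
       IsGreatest (dotp (yVec C) '' IntPts m n) (3 * (n : ℝ))) := by
  constructor
  · rintro ⟨u, hu⟩
    set r : Fin m → Fin 2 := fun i => flipSign (u i) with hr
    have hchoice : ∀ j, ∃ q, LitTrue u (C j q) ∧ ¬ LitTrue u (C j (q - 1)) :=
      fun j => cyclic _ (hu j).1 (hu j).2
    choose κ hκ using hchoice
    have hterm : ∀ (j : Fin n) (p : Fin 3),
        yVec C (C j p).1 j (κ j) (r (C j p).1) = 1 := by
      intro j p
      apply yVec_one_of
      rcases fin3_cases p (κ j) with hp | hp | hp
      · left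
        rw [hp]
        have ht := (litTrue_iff u (C j (κ j))).1 (hκ j).1
        have hs : r (C j (κ j)).1 = (C j (κ j)).2 := by
          simp only [hr]
          rw [ht, flipSign_flip_flip]
        rw [hs]
      · right; left
        rw [hp]
        have hf := (hκ j).2
        rw [litTrue_iff] at hf
        have h1 : u (C j (κ j - 1)).1 = flipSign (flipSign (C j (κ j - 1)).2) :=
          fin2_eq_flip_of_ne hf
        have hs : flipSign (r (C j (κ j - 1)).1) = (C j (κ j - 1)).2 := by
          simp only [hr]
          rw [flipSign_flip_flip, h1, flipSign_flip_flip]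
        rw [hs]
      · right; right
        rw [hp]
    have hval : dotp (yVec C) (zpt κ r) = 3 * (n : ℝ) := by
      rw [dotp_zpt C hdist]
      calc ∑ j, ∑ p : Fin 3, yVec C (C j p).1 j (κ j) (r (C j p).1)
          = ∑ _j : Fin n, ∑ _p : Fin 3, (1:ℝ) :=
            Finset.sum_congr rfl fun j _ => Finset.sum_congr rfl fun p _ => hterm j p
        _ = 3 * (n : ℝ) := by simp; ring
    exact ⟨⟨⟨zpt κ r, (zpt_mem κ r).1, hval⟩,
        by rintro v ⟨x, hx, rfl⟩; exact dotp_le C hdist hx⟩,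
      ⟨⟨zpt κ r, zpt_mem κ r, hval⟩,
        by rintro v ⟨x, hx, rfl⟩; exact dotp_le C hdist hx.1⟩⟩
  · rintro ⟨-, hInt⟩
    obtain ⟨z, hz, hval⟩ := hInt.1
    by_cases hn : n = 0
    · subst hn; exact ⟨fun _ => 0, fun j => j.elim0⟩
    by_cases hm : m = 0
    · subst hm; exact ((C ⟨0, Nat.pos_of_ne_zero hn⟩ 0).1).elim0
    obtain ⟨κ, r, hzeq⟩ :=
      int_struct hz ⟨0, Nat.pos_of_ne_zero hm⟩ ⟨0, Nat.pos_of_ne_zero hn⟩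
    subst hzeq
    rw [dotp_zpt C hdist] at hval
    have houter : ∀ j : Fin n,
        ∑ p : Fin 3, yVec C (C j p).1 j (κ j) (r (C j p).1) = 3 := by
      have h := myAllEq Finset.univ
        (fun j => ∑ p : Fin 3, yVec C (C j p).1 j (κ j) (r (C j p).1)) 3
        (fun j _ => by
          calc ∑ p : Fin 3, yVec C (C j p).1 j (κ j) (r (C j p).1)
              ≤ ∑ _p : Fin 3, (1:ℝ) :=
                Finset.sum_le_sum fun p _ => yVec_le_one C _ _ _ _
            _ = 3 := by norm_num)
        (by rw [Finset.card_univ, Fintype.card_fin, hval]; ring)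
      exact fun j => h j (Finset.mem_univ j)
    have hterm : ∀ (j : Fin n) (p : Fin 3),
        yVec C (C j p).1 j (κ j) (r (C j p).1) = 1 := by
      intro j
      have h := myAllEq Finset.univ
        (fun p : Fin 3 => yVec C (C j p).1 j (κ j) (r (C j p).1)) 1
        (fun p _ => yVec_le_one C _ _ _ _)
        (by rw [Finset.card_univ, Fintype.card_fin, houter j]; norm_num)
      exact fun p => h p (Finset.mem_univ p)
    refine ⟨fun i => flipSign (r i), fun j => ⟨⟨κ j, ?_⟩, ⟨κ j - 1, ?_⟩⟩⟩
    · rcases yVec_cond_of_one C (hterm j (κ j)) with h1 | h2 | h3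
      · rw [litTrue_iff]
        have h2 := congrArg Prod.snd h1
        show flipSign (r (C j (κ j)).1) = flipSign (C j (κ j)).2
        rw [h2]
      · have h2f : (C j (κ j - 1)).1 = (C j (κ j)).1 := by rw [h2]
        exact absurd (hdist j h2f) (fin3_sub_one_ne (κ j))
      · exact absurd (hdist j h3) (fin3_add_one_ne (κ j))
    · rcases yVec_cond_of_one C (hterm j (κ j - 1)) with h1 | h2 | h3
      · have h1f : (C j (κ j)).1 = (C j (κ j - 1)).1 := by rw [h1]
        exact absurd (hdist j h1f).symm (fin3_sub_one_ne (κ j))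
      · rw [litTrue_iff]
        intro habs
        have h2a : (C j (κ j - 1)).2 = flipSign (r (C j (κ j - 1)).1) := by rw [h2]
        have habs' : flipSign (r (C j (κ j - 1)).1) = flipSign (C j (κ j - 1)).2 := habs
        rw [h2a, flipSign_flip_flip] at habs'
        exact flip_ne _ habs'
      · exact absurd (hdist j h3) (fin3_add_ne_sub (κ j))
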